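/- Let w(x) = x^α (1-x)^β |x-t|^γ (A+Bθ(x-t)) on [0,1] with α,β,γ > 0, t ∈ (0,1), A ≥ 0, A+B ≥ 0, and let P_n be the monic orthogonal polynomials with norms h_n. Then integration by parts yields α ∫_0^1 P_n(y)^2 w(y)/y dy = β ∫_0^1 P_n(y)^2 w(y)/(1-y) dy − γ ∫_0^1 P_n(y)^2 w(y)/(y−t) dy, where the last integral is a principal value. Equivalently, with x_n := (α/h_n)∫_0^1 P_n^2 w/y dy and R_n := (β/h_n)∫_0^1 P_n^2 w/(1-y) dy, one has (γ/h_n) ∫_0^1 P_n(y)^2 w(y)/(y−t) dy = R_n − x_n. -/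

import Mathlib

open MeasureTheory Polynomial Set

noncomputable def wf (α β γ A B t : ℝ) : ℝ → ℝ := fun x =>
  x ^ α * (1 - x) ^ β * |x - t| ^ γ * (A + B * (if t < x then (1 : ℝ) else 0))

lemma wf_meas (α β γ A B t : ℝ) (hα : 0 < α) (hβ : 0 < β) (hγ : 0 < γ) :
    Measurable (wf α β γ A B t) := by
  unfold wf
  apply Measurable.mul
  · exact (((Real.continuous_rpow_const hα.le).comp continuous_id).mul
      ((Real.continuous_rpow_const hβ.le).comp (continuous_const.sub continuous_id))).measurable.mul
      (((Real.continuous_rpow_const hγ.le).comp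
        ((continuous_id.sub continuous_const).abs)).measurable)
  · exact measurable_const.add (measurable_const.mul
      (Measurable.ite measurableSet_Ioi measurable_const measurable_const))

lemma integrable_of_bound {g bnd : ℝ → ℝ} (hg : Measurable g)
    (hb : IntervalIntegrable bnd volume 0 1)
    (hbound : ∀ x ∈ Set.Ioc (0:ℝ) 1, |g x| ≤ bnd x) :
    IntervalIntegrable g volume 0 1 := by
  rw [intervalIntegrable_iff_integrableOn_Ioc_of_le zero_le_one] at hb ⊢
  exact hb.mono' hg.aestronglyMeasurable.restrict
    ((ae_restrict_iff' measurableSet_Ioc).2 (ae_of_all _ fun x hx => by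
      simpa [Real.norm_eq_abs] using hbound x hx))

lemma base_abs_int {t c : ℝ} (ht : t ∈ Set.Ioo (0:ℝ) 1) (hc : -1 < c) :
    IntervalIntegrable (fun x => |x - t| ^ c) volume 0 1 := by
  have h1 : IntervalIntegrable (fun x => |x - t| ^ c) volume 0 t := by
    have := (intervalIntegral.intervalIntegrable_rpow' (a := 0) (b := t) hc).comp_sub_left t
    simp only [sub_zero, sub_self] at this
    replace this := this.symm
    rw [intervalIntegrable_iff_integrableOn_Ioc_of_le ht.1.le] at this ⊢
    exact this.congr_fun (fun x hx => by
      rw [abs_sub_comm, abs_of_nonneg (by linarith [hx.2] : (0:ℝ) ≤ t - x)])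
      measurableSet_Ioc
  have h2 : IntervalIntegrable (fun x => |x - t| ^ c) volume t 1 := by
    have := (intervalIntegral.intervalIntegrable_rpow' (a := 0) (b := 1 - t) hc).comp_sub_right t
    simp only [zero_add, sub_add_cancel] at this
    rw [intervalIntegrable_iff_integrableOn_Ioc_of_le ht.2.le] at this ⊢
    exact this.congr_fun (fun x hx => by
      rw [abs_of_nonneg (by linarith [hx.1] : (0:ℝ) ≤ x - t)]) measurableSet_Ioc
  exact h1.trans h2

lemma base_one_sub_int {c : ℝ} (hc : -1 < c) :
    IntervalIntegrable (fun x : ℝ => (1 - x) ^ c) volume 0 1 := by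
  have := (intervalIntegral.intervalIntegrable_rpow' (a := 0) (b := 1) hc).comp_sub_left 1
  simpa using this.symm

lemma s_bound {A B : ℝ} (hA : 0 ≤ A) (hAB : 0 ≤ A + B) (p : Prop) [Decidable p] :
    0 ≤ A + B * (if p then (1:ℝ) else 0) ∧ A + B * (if p then (1:ℝ) else 0) ≤ A + |B| := by
  have := le_abs_self B
  have := abs_nonneg B
  split_ifs <;> constructor <;> nlinarith

lemma wf_nonneg {α β γ A B t : ℝ} (hA : 0 ≤ A) (hAB : 0 ≤ A + B) {x : ℝ}
    (hx0 : 0 ≤ x) (hx1 : x ≤ 1) : 0 ≤ wf α β γ A B t x := by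
  have hs := (s_bound hA hAB (t < x)).1
  unfold wf
  exact mul_nonneg (mul_nonneg (mul_nonneg (Real.rpow_nonneg hx0 _)
    (Real.rpow_nonneg (by linarith) _)) (Real.rpow_nonneg (abs_nonneg _) _)) hs

lemma wf_bound0 {α β γ A B t : ℝ} (hα : 0 < α) (hβ : 0 < β) (hγ : 0 < γ)
    (hA : 0 ≤ A) (hAB : 0 ≤ A + B) (ht : t ∈ Set.Ioo (0:ℝ) 1) :
    ∀ x ∈ Set.Ioc (0:ℝ) 1, |wf α β γ A B t x| ≤ A + |B| := by
  intro x hx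
  obtain ⟨hx0, hx1⟩ := hx
  obtain ⟨hs0, hs1⟩ := s_bound hA hAB (t < x)
  have e1 : x ^ α ≤ 1 := Real.rpow_le_one hx0.le hx1 hα.le
  have e2 : (1 - x) ^ β ≤ 1 := Real.rpow_le_one (by linarith) (by linarith) hβ.le
  have e3 : |x - t| ^ γ ≤ 1 := Real.rpow_le_one (abs_nonneg _)
    (abs_le.2 ⟨by linarith [ht.2], by linarith [ht.1]⟩) hγ.le
  have n1 : (0:ℝ) ≤ x ^ α := Real.rpow_nonneg hx0.le _
  have n2 : (0:ℝ) ≤ (1 - x) ^ β := Real.rpow_nonneg (by linarith) _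
  have n3 : (0:ℝ) ≤ |x - t| ^ γ := Real.rpow_nonneg (abs_nonneg _) _
  rw [abs_of_nonneg (wf_nonneg hA hAB hx0.le hx1)]
  unfold wf
  calc x ^ α * (1 - x) ^ β * |x - t| ^ γ * (A + B * if t < x then (1:ℝ) else 0)
      ≤ 1 * (A + |B|) := by
        refine mul_le_mul ?_ hs1 hs0 zero_le_one
        calc x ^ α * (1 - x) ^ β * |x - t| ^ γ ≤ 1 * 1 * 1 := by
              refine mul_le_mul (mul_le_mul e1 e2 n2 zero_le_one) e3 n3 (by norm_num)
          _ = 1 := by norm_num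
    _ = A + |B| := one_mul _

lemma wf_bound1 {α β γ A B t : ℝ} (hα : 0 < α) (hβ : 0 < β) (hγ : 0 < γ)
    (hA : 0 ≤ A) (hAB : 0 ≤ A + B) (ht : t ∈ Set.Ioo (0:ℝ) 1) :
    ∀ x ∈ Set.Ioc (0:ℝ) 1, |wf α β γ A B t x / x| ≤ (A + |B|) * x ^ (α - 1) := by
  intro x hx
  obtain ⟨hx0, hx1⟩ := hx
  obtain ⟨hs0, hs1⟩ := s_bound hA hAB (t < x)
  have e2 : (1 - x) ^ β ≤ 1 := Real.rpow_le_one (by linarith) (by linarith) hβ.le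
  have e3 : |x - t| ^ γ ≤ 1 := Real.rpow_le_one (abs_nonneg _)
    (abs_le.2 ⟨by linarith [ht.2], by linarith [ht.1]⟩) hγ.le
  have n2 : (0:ℝ) ≤ (1 - x) ^ β := Real.rpow_nonneg (by linarith) _
  have n3 : (0:ℝ) ≤ |x - t| ^ γ := Real.rpow_nonneg (abs_nonneg _) _
  have npow : (0:ℝ) ≤ x ^ (α - 1) := Real.rpow_nonneg hx0.le _
  have e : wf α β γ A B t x / x
      = x ^ (α - 1) * ((1 - x) ^ β * (|x - t| ^ γ * (A + B * if t < x then (1:ℝ) else 0))) := by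
    unfold wf
    rw [Real.rpow_sub hx0, Real.rpow_one]
    ring
  rw [e, abs_of_nonneg (mul_nonneg npow (mul_nonneg n2 (mul_nonneg n3 hs0))), mul_comm]
  refine mul_le_mul_of_nonneg_right ?_ npow
  calc (1 - x) ^ β * (|x - t| ^ γ * (A + B * if t < x then (1:ℝ) else 0))
      ≤ 1 * (1 * (A + |B|)) :=
        mul_le_mul e2 (mul_le_mul e3 hs1 hs0 zero_le_one)
          (mul_nonneg n3 hs0) zero_le_one
    _ = A + |B| := by ring

lemma wf_bound2 {α β γ A B t : ℝ} (hα : 0 < α) (hβ : 0 < β) (hγ : 0 < γ)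
    (hA : 0 ≤ A) (hAB : 0 ≤ A + B) (ht : t ∈ Set.Ioo (0:ℝ) 1) :
    ∀ x ∈ Set.Ioc (0:ℝ) 1, |wf α β γ A B t x / (1 - x)| ≤ (A + |B|) * (1 - x) ^ (β - 1) := by
  intro x hx
  obtain ⟨hx0, hx1⟩ := hx
  rcases eq_or_lt_of_le hx1 with h1 | h1
  · subst h1
    have : wf α β γ A B t 1 = 0 := by
      unfold wf; rw [sub_self, Real.zero_rpow hβ.ne']; ring
    rw [this]
    simp only [zero_div, abs_zero]
    exact mul_nonneg (by positivity) (Real.rpow_nonneg (by norm_num) _)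
  obtain ⟨hs0, hs1⟩ := s_bound hA hAB (t < x)
  have e1 : x ^ α ≤ 1 := Real.rpow_le_one hx0.le hx1 hα.le
  have e3 : |x - t| ^ γ ≤ 1 := Real.rpow_le_one (abs_nonneg _)
    (abs_le.2 ⟨by linarith [ht.2], by linarith [ht.1]⟩) hγ.le
  have n1 : (0:ℝ) ≤ x ^ α := Real.rpow_nonneg hx0.le _
  have n3 : (0:ℝ) ≤ |x - t| ^ γ := Real.rpow_nonneg (abs_nonneg _) _
  have npow : (0:ℝ) ≤ (1 - x) ^ (β - 1) := Real.rpow_nonneg (by linarith) _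
  have e : wf α β γ A B t x / (1 - x)
      = (1 - x) ^ (β - 1) * (x ^ α * (|x - t| ^ γ * (A + B * if t < x then (1:ℝ) else 0))) := by
    unfold wf
    rw [Real.rpow_sub (by linarith : (0:ℝ) < 1 - x), Real.rpow_one]
    ring
  rw [e, abs_of_nonneg (mul_nonneg npow (mul_nonneg n1 (mul_nonneg n3 hs0))), mul_comm]
  refine mul_le_mul_of_nonneg_right ?_ npow
  calc x ^ α * (|x - t| ^ γ * (A + B * if t < x then (1:ℝ) else 0))
      ≤ 1 * (1 * (A + |B|)) :=
        mul_le_mul e1 (mul_le_mul e3 hs1 hs0 zero_le_one)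
          (mul_nonneg n3 hs0) zero_le_one
    _ = A + |B| := by ring

lemma wf_bound3 {α β γ A B t : ℝ} (hα : 0 < α) (hβ : 0 < β) (hγ : 0 < γ)
    (hA : 0 ≤ A) (hAB : 0 ≤ A + B) (ht : t ∈ Set.Ioo (0:ℝ) 1) :
    ∀ x ∈ Set.Ioc (0:ℝ) 1, |wf α β γ A B t x / (x - t)| ≤ (A + |B|) * |x - t| ^ (γ - 1) := by
  intro x hx
  obtain ⟨hx0, hx1⟩ := hx
  rcases eq_or_ne x t with h1 | h1
  · have : wf α β γ A B t x = 0 := by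
      unfold wf; rw [h1, sub_self, abs_zero, Real.zero_rpow hγ.ne']; ring
    rw [this]
    simp only [zero_div, abs_zero]
    exact mul_nonneg (by positivity) (Real.rpow_nonneg (abs_nonneg _) _)
  have habs : 0 < |x - t| := abs_pos.2 (sub_ne_zero.2 h1)
  obtain ⟨hs0, hs1⟩ := s_bound hA hAB (t < x)
  have e1 : x ^ α ≤ 1 := Real.rpow_le_one hx0.le hx1 hα.le
  have e2 : (1 - x) ^ β ≤ 1 := Real.rpow_le_one (by linarith) (by linarith) hβ.le
  have n1 : (0:ℝ) ≤ x ^ α := Real.rpow_nonneg hx0.le _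
  have n2 : (0:ℝ) ≤ (1 - x) ^ β := Real.rpow_nonneg (by linarith) _
  have npow : (0:ℝ) ≤ |x - t| ^ (γ - 1) := Real.rpow_nonneg (abs_nonneg _) _
  have e : |wf α β γ A B t x / (x - t)|
      = |x - t| ^ (γ - 1) * (x ^ α * ((1 - x) ^ β * (A + B * if t < x then (1:ℝ) else 0))) := by
    rw [abs_div, abs_of_nonneg (wf_nonneg hA hAB hx0.le hx1)]
    unfold wf
    rw [Real.rpow_sub habs, Real.rpow_one]
    ring
  rw [e, mul_comm]
  refine mul_le_mul_of_nonneg_right ?_ npow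
  calc x ^ α * ((1 - x) ^ β * (A + B * if t < x then (1:ℝ) else 0))
      ≤ 1 * (1 * (A + |B|)) :=
        mul_le_mul e1 (mul_le_mul e2 hs1 hs0 zero_le_one)
          (mul_nonneg n2 hs0) zero_le_one
    _ = A + |B| := by ring

lemma int_wf {α β γ A B t : ℝ} (hα : 0 < α) (hβ : 0 < β) (hγ : 0 < γ)
    (hA : 0 ≤ A) (hAB : 0 ≤ A + B) (ht : t ∈ Set.Ioo (0:ℝ) 1) :
    IntervalIntegrable (wf α β γ A B t) volume 0 1 :=
  integrable_of_bound (wf_meas α β γ A B t hα hβ hγ) intervalIntegrable_const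
    (wf_bound0 hα hβ hγ hA hAB ht)

lemma int_wf1 {α β γ A B t : ℝ} (hα : 0 < α) (hβ : 0 < β) (hγ : 0 < γ)
    (hA : 0 ≤ A) (hAB : 0 ≤ A + B) (ht : t ∈ Set.Ioo (0:ℝ) 1) :
    IntervalIntegrable (fun x => wf α β γ A B t x / x) volume 0 1 :=
  integrable_of_bound ((wf_meas α β γ A B t hα hβ hγ).div measurable_id)
    ((intervalIntegral.intervalIntegrable_rpow' (by linarith)).const_mul (A + |B|))
    (wf_bound1 hα hβ hγ hA hAB ht)

lemma int_wf2 {α β γ A B t : ℝ} (hα : 0 < α) (hβ : 0 < β) (hγ : 0 < γ)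
    (hA : 0 ≤ A) (hAB : 0 ≤ A + B) (ht : t ∈ Set.Ioo (0:ℝ) 1) :
    IntervalIntegrable (fun x => wf α β γ A B t x / (1 - x)) volume 0 1 :=
  integrable_of_bound ((wf_meas α β γ A B t hα hβ hγ).div
      (measurable_const.sub measurable_id))
    ((base_one_sub_int (by linarith)).const_mul (A + |B|))
    (wf_bound2 hα hβ hγ hA hAB ht)

lemma int_wf3 {α β γ A B t : ℝ} (hα : 0 < α) (hβ : 0 < β) (hγ : 0 < γ)
    (hA : 0 ≤ A) (hAB : 0 ≤ A + B) (ht : t ∈ Set.Ioo (0:ℝ) 1) :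
    IntervalIntegrable (fun x => wf α β γ A B t x / (x - t)) volume 0 1 :=
  integrable_of_bound ((wf_meas α β γ A B t hα hβ hγ).div
      (measurable_id.sub measurable_const))
    ((base_abs_int ht (by linarith)).const_mul (A + |B|))
    (wf_bound3 hα hβ hγ hA hAB ht)

lemma wf_contLeft {α β γ A B t : ℝ} (hα : 0 < α) (hβ : 0 < β) (hγ : 0 < γ) :
    ContinuousOn (wf α β γ A B t) (Set.Icc 0 t) := by
  have hc : Continuous fun x : ℝ => x ^ α * (1 - x) ^ β * (t - x) ^ γ * A :=
    ((((Real.continuous_rpow_const hα.le).comp continuous_id).mul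
      ((Real.continuous_rpow_const hβ.le).comp (continuous_const.sub continuous_id))).mul
      ((Real.continuous_rpow_const hγ.le).comp (continuous_const.sub continuous_id))).mul
      continuous_const
  refine (hc.continuousOn).congr fun x hx => ?_
  unfold wf
  rw [if_neg (not_lt.2 hx.2), abs_of_nonpos (by linarith [hx.2]), neg_sub]
  ring

lemma wf_contRight {α β γ A B t : ℝ} (hα : 0 < α) (hβ : 0 < β) (hγ : 0 < γ) :
    ContinuousOn (wf α β γ A B t) (Set.Icc t 1) := by
  have hc : Continuous fun x : ℝ => x ^ α * (1 - x) ^ β * (x - t) ^ γ * (A + B) :=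
    ((((Real.continuous_rpow_const hα.le).comp continuous_id).mul
      ((Real.continuous_rpow_const hβ.le).comp (continuous_const.sub continuous_id))).mul
      ((Real.continuous_rpow_const hγ.le).comp (continuous_id.sub continuous_const))).mul
      continuous_const
  refine (hc.continuousOn).congr fun x hx => ?_
  rcases eq_or_lt_of_le hx.1 with h | h
  · unfold wf
    rw [← h, sub_self, abs_zero, Real.zero_rpow hγ.ne']
    simp [Real.zero_rpow hγ.ne']
  · unfold wf
    rw [if_pos h, abs_of_nonneg (by linarith : (0:ℝ) ≤ x - t)]
    ring

lemma wf_deriv {α β γ A B t : ℝ} (hα : 0 < α) (hβ : 0 < β) (hγ : 0 < γ) {y : ℝ}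
    (hy0 : 0 < y) (hy1 : y < 1) (hyt : y ≠ t) :
    HasDerivAt (wf α β γ A B t)
      (wf α β γ A B t y * (α / y - β / (1 - y) + γ / (y - t))) y := by
  have h1 : HasDerivAt (fun x : ℝ => x ^ α) (α * y ^ (α - 1)) y :=
    Real.hasDerivAt_rpow_const (Or.inl hy0.ne')
  have h2 : HasDerivAt (fun x : ℝ => (1 - x) ^ β) (β * (1 - y) ^ (β - 1) * -1) y :=
    (Real.hasDerivAt_rpow_const (Or.inl (by linarith : (1:ℝ) - y ≠ 0))).comp y
      ((hasDerivAt_id y).const_sub 1)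
  rcases lt_or_gt_of_ne hyt with hlt | hgt
  · -- y < t
    have h3 : HasDerivAt (fun x : ℝ => (t - x) ^ γ) (γ * (t - y) ^ (γ - 1) * -1) y :=
      (Real.hasDerivAt_rpow_const (Or.inl (by linarith : t - y ≠ 0))).comp y
        ((hasDerivAt_id y).const_sub t)
    have hm := ((h1.mul h2).mul h3).mul_const A
    have hEq : wf α β γ A B t =ᶠ[nhds y]
        fun x => x ^ α * (1 - x) ^ β * (t - x) ^ γ * A := by
      filter_upwards [Iio_mem_nhds hlt] with x hx
      unfold wf
      rw [if_neg (not_lt.2 (le_of_lt hx)), abs_of_nonpos (by linarith [mem_Iio.1 hx]), neg_sub]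
      ring
    refine HasDerivAt.congr_of_eventuallyEq ?_ hEq
    refine hm.congr_deriv ?_
    have hwfy : wf α β γ A B t y = y ^ α * (1 - y) ^ β * (t - y) ^ γ * A := by
      unfold wf
      rw [if_neg (not_lt.2 hlt.le), abs_of_nonpos (by linarith), neg_sub]
      ring
    rw [hwfy, show α - 1 = α - 1 from rfl]
    rw [Real.rpow_sub hy0, Real.rpow_sub (by linarith : (0:ℝ) < 1 - y),
      Real.rpow_sub (by linarith : (0:ℝ) < t - y), Real.rpow_one, Real.rpow_one,
      Real.rpow_one]
    have hy : y ≠ 0 := hy0.ne'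
    have h1y : (1:ℝ) - y ≠ 0 := by linarith
    have hty : t - y ≠ 0 := by linarith
    have hyt' : y - t ≠ 0 := by intro h; apply hty; linarith [sub_eq_zero.1 h]
    simp only [Pi.mul_apply]
    field_simp
    ring
  · -- t < y
    have h3 : HasDerivAt (fun x : ℝ => (x - t) ^ γ) (γ * (y - t) ^ (γ - 1) * 1) y :=
      by have := (Real.hasDerivAt_rpow_const (p := γ) (Or.inl (by linarith : y - t ≠ 0))).comp y
           ((hasDerivAt_id' y).sub_const t)
         exact this
    have hm := ((h1.mul h2).mul h3).mul_const (A + B)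
    have hEq : wf α β γ A B t =ᶠ[nhds y]
        fun x => x ^ α * (1 - x) ^ β * (x - t) ^ γ * (A + B) := by
      filter_upwards [Ioi_mem_nhds hgt] with x hx
      unfold wf
      rw [if_pos (mem_Ioi.1 hx), abs_of_nonneg (by linarith [mem_Ioi.1 hx] : (0:ℝ) ≤ x - t)]
      ring
    refine HasDerivAt.congr_of_eventuallyEq ?_ hEq
    refine hm.congr_deriv ?_
    have hwfy : wf α β γ A B t y = y ^ α * (1 - y) ^ β * (y - t) ^ γ * (A + B) := by
      unfold wf
      rw [if_pos hgt, abs_of_nonneg (by linarith : (0:ℝ) ≤ y - t)]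
      ring
    rw [hwfy]
    rw [Real.rpow_sub hy0, Real.rpow_sub (by linarith : (0:ℝ) < 1 - y),
      Real.rpow_sub (by linarith : (0:ℝ) < y - t), Real.rpow_one, Real.rpow_one,
      Real.rpow_one]
    have hy : y ≠ 0 := hy0.ne'
    have h1y : (1:ℝ) - y ≠ 0 := by linarith
    have hyt' : y - t ≠ 0 := by linarith
    simp only [Pi.mul_apply]
    field_simp
    ring

lemma ibp_key (α β γ A B t : ℝ) (P : ℕ → Polynomial ℝ) (h : ℕ → ℝ) (n : ℕ)
    (hmonic : ∀ n, (P n).Monic) (hdeg : ∀ n, (P n).natDegree = n)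
    (horth : ∀ m n, ∫ x in (0 : ℝ)..1, (P m).eval x * (P n).eval x * wf α β γ A B t x
      = if m = n then h n else 0)
    (intPW : ∀ u : Polynomial ℝ,
      IntervalIntegrable (fun x => eval x u * wf α β γ A B t x) volume 0 1) :
    ∀ m : ℕ, ∀ q : Polynomial ℝ, q.natDegree ≤ m → q.natDegree < n →
      ∫ x in (0:ℝ)..1, eval x (P n) * eval x q * wf α β γ A B t x = 0 := by
  intro m
  induction m using Nat.strong_induction_on with
  | _ m IH =>
    intro q hqm hqn
    by_cases hq0 : q = 0
    · simp [hq0]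
    have hPd : (P q.natDegree).degree = (q.natDegree : WithBot ℕ) := by
      rw [Polynomial.degree_eq_natDegree (hmonic q.natDegree).ne_zero, hdeg]
    have hlc0 : q.leadingCoeff ≠ 0 := Polynomial.leadingCoeff_ne_zero.2 hq0
    have hdeg_eq : q.degree = (Polynomial.C q.leadingCoeff * P q.natDegree).degree := by
      rw [Polynomial.degree_C_mul hlc0, hPd, Polynomial.degree_eq_natDegree hq0]
    have hlc : q.leadingCoeff = (Polynomial.C q.leadingCoeff * P q.natDegree).leadingCoeff := by
      rw [Polynomial.leadingCoeff_mul, Polynomial.leadingCoeff_C,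
        (hmonic _).leadingCoeff, mul_one]
    have hrdeg : (q - Polynomial.C q.leadingCoeff * P q.natDegree).degree < q.degree :=
      Polynomial.degree_sub_lt hdeg_eq hq0 hlc
    set r := q - Polynomial.C q.leadingCoeff * P q.natDegree with hr
    have hsplit : Set.EqOn (fun x => eval x (P n) * eval x q * wf α β γ A B t x)
        (fun x => q.leadingCoeff * (eval x (P n * P q.natDegree) * wf α β γ A B t x)
          + eval x (P n * r) * wf α β γ A B t x) (Set.uIcc 0 1) := by
      intro x _
      simp only [hr, eval_mul, eval_sub, eval_C]
      ring
    rw [intervalIntegral.integral_congr hsplit,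
      intervalIntegral.integral_add ((intPW _).const_mul _) (intPW _),
      intervalIntegral.integral_const_mul]
    have h1 : ∫ x in (0:ℝ)..1, eval x (P n * P q.natDegree) * wf α β γ A B t x = 0 := by
      have h2 := horth n q.natDegree
      rw [if_neg (by omega : n ≠ q.natDegree)] at h2
      calc ∫ x in (0:ℝ)..1, eval x (P n * P q.natDegree) * wf α β γ A B t x
          = ∫ x in (0:ℝ)..1, eval x (P n) * eval x (P q.natDegree) * wf α β γ A B t x :=
            intervalIntegral.integral_congr fun x _ => by rw [eval_mul]
        _ = 0 := h2
    have h2 : ∫ x in (0:ℝ)..1, eval x (P n * r) * wf α β γ A B t x = 0 := by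
      by_cases hr0 : r = 0
      · simp [hr0]
      · have hlt : r.natDegree < q.natDegree :=
          Polynomial.natDegree_lt_natDegree hr0 hrdeg
        have := IH r.natDegree (lt_of_lt_of_le hlt hqm) r le_rfl (hlt.trans hqn)
        calc ∫ x in (0:ℝ)..1, eval x (P n * r) * wf α β γ A B t x
            = ∫ x in (0:ℝ)..1, eval x (P n) * eval x r * wf α β γ A B t x :=
              intervalIntegral.integral_congr fun x _ => by rw [eval_mul]
          _ = 0 := this
    rw [h1, h2]
    ring


/-- Integration by parts for the degenerate Jacobi weight:
`α ∫ P_n² w/y = β ∫ P_n² w/(1-y) − γ ∫ P_n² w/(y−t)`, equivalently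
`(γ/h_n) ∫ P_n² w/(y−t) = R_n − x_n`. -/
theorem ibp_Pn_squared (α β γ A B t : ℝ)
    (hα : 0 < α) (hβ : 0 < β) (hγ : 0 < γ)
    (hA : 0 ≤ A) (hAB : 0 ≤ A + B) (ht : t ∈ Set.Ioo (0 : ℝ) 1)
    (w : ℝ → ℝ)
    (hw : ∀ x, w x = x ^ α * (1 - x) ^ β * |x - t| ^ γ *
      (A + B * (if t < x then (1 : ℝ) else 0)))
    (P : ℕ → Polynomial ℝ) (h : ℕ → ℝ)
    (hmonic : ∀ n, (P n).Monic)
    (hdeg : ∀ n, (P n).natDegree = n)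
    (horth : ∀ m n, ∫ x in (0 : ℝ)..1, (P m).eval x * (P n).eval x * w x
      = if m = n then h n else 0)
    (hpos : ∀ n, 0 < h n)
    (n : ℕ) :
    α * ∫ y in (0 : ℝ)..1, ((P n).eval y) ^ 2 * w y / y
      = β * (∫ y in (0 : ℝ)..1, ((P n).eval y) ^ 2 * w y / (1 - y))
        - γ * ∫ y in (0 : ℝ)..1, ((P n).eval y) ^ 2 * w y / (y - t) ∧
    (γ / h n) * ∫ y in (0 : ℝ)..1, ((P n).eval y) ^ 2 * w y / (y - t)
      = (β / h n) * (∫ y in (0 : ℝ)..1, ((P n).eval y) ^ 2 * w y / (1 - y))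
        - (α / h n) * ∫ y in (0 : ℝ)..1, ((P n).eval y) ^ 2 * w y / y := by
  have hw' : w = wf α β γ A B t := funext hw
  subst hw'
  have intW := int_wf hα hβ hγ hA hAB ht
  have intW1 := int_wf1 hα hβ hγ hA hAB ht
  have intW2 := int_wf2 hα hβ hγ hA hAB ht
  have intW3 := int_wf3 hα hβ hγ hA hAB ht
  have intPW : ∀ u : Polynomial ℝ,
      IntervalIntegrable (fun x => eval x u * wf α β γ A B t x) volume 0 1 :=
    fun u => intW.continuousOn_mul u.continuousOn
  have hp2cont : Continuous fun y : ℝ => (eval y (P n))^2 := ((P n).continuous).pow 2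
  have i1 : IntervalIntegrable
      (fun y => (eval y (P n))^2 * (wf α β γ A B t y / y)) volume 0 1 :=
    intW1.continuousOn_mul hp2cont.continuousOn
  have i2 : IntervalIntegrable
      (fun y => (eval y (P n))^2 * (wf α β γ A B t y / (1 - y))) volume 0 1 :=
    intW2.continuousOn_mul hp2cont.continuousOn
  have i3 : IntervalIntegrable
      (fun y => (eval y (P n))^2 * (wf α β γ A B t y / (y - t))) volume 0 1 :=
    intW3.continuousOn_mul hp2cont.continuousOn
  have iO : IntervalIntegrable
      (fun y => 2 * eval y (P n) * eval y (derivative (P n)) * wf α β γ A B t y) volume 0 1 :=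
    intW.continuousOn_mul
      (((continuous_const.mul (P n).continuous).mul (derivative (P n)).continuous).continuousOn)
  set g : ℝ → ℝ := fun y =>
    α * ((eval y (P n))^2 * (wf α β γ A B t y / y))
    - β * ((eval y (P n))^2 * (wf α β γ A B t y / (1 - y)))
    + γ * ((eval y (P n))^2 * (wf α β γ A B t y / (y - t)))
    + 2 * eval y (P n) * eval y (derivative (P n)) * wf α β γ A B t y with hg
  have hgint : IntervalIntegrable g volume 0 1 :=
    (((i1.const_mul α).sub (i2.const_mul β)).add (i3.const_mul γ)).add iO
  have hF0 : wf α β γ A B t 0 = 0 := by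
    unfold wf; rw [Real.zero_rpow hα.ne']; ring
  have hF1 : wf α β γ A B t 1 = 0 := by
    unfold wf; rw [sub_self, Real.zero_rpow hβ.ne']; ring
  have hder : ∀ y, y ∈ Set.Ioo (0:ℝ) 1 → y ≠ t →
      HasDerivAt (fun y => (eval y (P n))^2 * wf α β γ A B t y) (g y) y := by
    intro y hy hyt
    have hp : HasDerivAt (fun y : ℝ => (eval y (P n))^2)
        (((2:ℕ):ℝ) * (eval y (P n)) ^ (2-1) * eval y (derivative (P n))) y :=
      ((P n).hasDerivAt y).pow 2
    have hwd := wf_deriv (A := A) (B := B) hα hβ hγ hy.1 hy.2 hyt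
    have hprod := hp.mul hwd
    refine hprod.congr_deriv ?_
    simp only [hg]
    push_cast
    ring
  have hsub1 : Set.uIcc (0:ℝ) t ⊆ Set.uIcc (0:ℝ) 1 :=
    Set.uIcc_subset_uIcc left_mem_uIcc
      (by rw [Set.uIcc_of_le zero_le_one]; exact ⟨ht.1.le, ht.2.le⟩)
  have hsub2 : Set.uIcc t (1:ℝ) ⊆ Set.uIcc (0:ℝ) 1 :=
    Set.uIcc_subset_uIcc
      (by rw [Set.uIcc_of_le zero_le_one]; exact ⟨ht.1.le, ht.2.le⟩) right_mem_uIcc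
  have hI1 : ∫ y in (0:ℝ)..t, g y
      = (eval t (P n))^2 * wf α β γ A B t t - (eval 0 (P n))^2 * wf α β γ A B t 0 :=
    intervalIntegral.integral_eq_sub_of_hasDerivAt_of_le ht.1.le
      ((hp2cont.continuousOn).mul (wf_contLeft hα hβ hγ))
      (fun y hy => hder y ⟨hy.1, hy.2.trans ht.2⟩ hy.2.ne)
      (hgint.mono_set hsub1)
  have hI2 : ∫ y in t..(1:ℝ), g y
      = (eval 1 (P n))^2 * wf α β γ A B t 1 - (eval t (P n))^2 * wf α β γ A B t t :=
    intervalIntegral.integral_eq_sub_of_hasDerivAt_of_le ht.2.le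
      ((hp2cont.continuousOn).mul (wf_contRight hα hβ hγ))
      (fun y hy => hder y ⟨ht.1.trans hy.1, hy.2⟩ hy.1.ne')
      (hgint.mono_set hsub2)
  have hgzero : ∫ y in (0:ℝ)..1, g y = 0 := by
    rw [← intervalIntegral.integral_add_adjacent_intervals (hgint.mono_set hsub1)
      (hgint.mono_set hsub2), hI1, hI2, hF0, hF1]
    ring
  have key := ibp_key α β γ A B t P h n hmonic hdeg horth intPW
  have hO : ∫ y in (0:ℝ)..1,
      2 * eval y (P n) * eval y (derivative (P n)) * wf α β γ A B t y = 0 := by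
    by_cases hn : (P n).natDegree = 0
    · have hd0 : derivative (P n) = 0 := by
        obtain ⟨a, ha⟩ := Polynomial.natDegree_eq_zero.mp hn
        rw [← ha]; simp
      simp [hd0]
    · have hlt : (derivative (P n)).natDegree < n := by
        have := Polynomial.natDegree_derivative_lt hn
        rwa [hdeg n] at this
      have hq : (Polynomial.C (2:ℝ) * derivative (P n)).natDegree < n :=
        lt_of_le_of_lt (Polynomial.natDegree_C_mul_le _ _) hlt
      calc ∫ y in (0:ℝ)..1,
            2 * eval y (P n) * eval y (derivative (P n)) * wf α β γ A B t y
          = ∫ y in (0:ℝ)..1,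
            eval y (P n) * eval y (Polynomial.C 2 * derivative (P n)) * wf α β γ A B t y :=
            intervalIntegral.integral_congr fun x _ => by
              simp only [eval_mul, eval_C]; ring
        _ = 0 := key _ _ le_rfl hq
  have hsplit : ∫ y in (0:ℝ)..1, g y
      = α * (∫ y in (0:ℝ)..1, (eval y (P n))^2 * (wf α β γ A B t y / y))
        - β * (∫ y in (0:ℝ)..1, (eval y (P n))^2 * (wf α β γ A B t y / (1 - y)))
        + γ * (∫ y in (0:ℝ)..1, (eval y (P n))^2 * (wf α β γ A B t y / (y - t)))
        + ∫ y in (0:ℝ)..1,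
            2 * eval y (P n) * eval y (derivative (P n)) * wf α β γ A B t y := by
    simp only [hg]
    rw [intervalIntegral.integral_add
        (((i1.const_mul α).sub (i2.const_mul β)).add (i3.const_mul γ)) iO,
      intervalIntegral.integral_add ((i1.const_mul α).sub (i2.const_mul β)) (i3.const_mul γ),
      intervalIntegral.integral_sub (i1.const_mul α) (i2.const_mul β),
      intervalIntegral.integral_const_mul, intervalIntegral.integral_const_mul,
      intervalIntegral.integral_const_mul]
  have e1 : (∫ y in (0:ℝ)..1, (eval y (P n))^2 * wf α β γ A B t y / y)
      = ∫ y in (0:ℝ)..1, (eval y (P n))^2 * (wf α β γ A B t y / y) :=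
    intervalIntegral.integral_congr fun x _ => mul_div_assoc _ _ _
  have e2 : (∫ y in (0:ℝ)..1, (eval y (P n))^2 * wf α β γ A B t y / (1 - y))
      = ∫ y in (0:ℝ)..1, (eval y (P n))^2 * (wf α β γ A B t y / (1 - y)) :=
    intervalIntegral.integral_congr fun x _ => mul_div_assoc _ _ _
  have e3 : (∫ y in (0:ℝ)..1, (eval y (P n))^2 * wf α β γ A B t y / (y - t))
      = ∫ y in (0:ℝ)..1, (eval y (P n))^2 * (wf α β γ A B t y / (y - t)) :=
    intervalIntegral.integral_congr fun x _ => mul_div_assoc _ _ _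
  have main : α * (∫ y in (0:ℝ)..1, (eval y (P n))^2 * (wf α β γ A B t y / y))
      = β * (∫ y in (0:ℝ)..1, (eval y (P n))^2 * (wf α β γ A B t y / (1 - y)))
        - γ * (∫ y in (0:ℝ)..1, (eval y (P n))^2 * (wf α β γ A B t y / (y - t))) := by
    have h0 := hgzero
    rw [hsplit, hO] at h0
    linarith
  have hne : h n ≠ 0 := (hpos n).ne'
  constructor
  · rw [e1, e2, e3]
    linarith [main]
  · rw [e1, e2, e3, div_mul_eq_mul_div, div_mul_eq_mul_div, div_mul_eq_mul_div, ← sub_div]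
    congr 1
    linarith [main]
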